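/- Let f be a Boolean function in n variables and let A be an affine subspace of F_2^n with indicator function 1_A (the Boolean function with 1_A(x) = 1 if and only if x ∈ A). Then deg(f·1_A) = deg(f|_A) + deg(1_A), where deg(1_A) equals the co-dimension of A. Consequently, for 1 ≤ r ≤ n - k, a nonzero homogeneous Boolean function f of degree r in n variables has no degree-drop affine subspace of co-dimension k if and only if deg(f·1_A) = r + k for every affine subspace A of co-dimension k. -/

import Mathlib

open Finset

/-- A Boolean function in `n` variables. -/
abbrev BF (n : ℕ) := (Fin n → ZMod 2) → ZMod 2

/-- The coefficient, in the algebraic normal form of `f`, of the monomial whose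
set of variables is `S` (computed by the Möbius/binary Möbius transform). -/
def anf {n : ℕ} (f : BF n) (S : Finset (Fin n)) : ZMod 2 :=
  ∑ T ∈ S.powerset, f (fun i => if i ∈ T then 1 else 0)

/-- The algebraic degree of a Boolean function, with `⊥` (i.e. `-∞`) for the zero function. -/
def degB {n : ℕ} (f : BF n) : WithBot ℕ :=
  (Finset.univ.filter (fun S : Finset (Fin n) => anf f S ≠ 0)).sup
    (fun S => (S.card : WithBot ℕ))

/-- `f` is homogeneous of degree `r`: all monomials of its ANF have degree `r`. -/
def Homog {n : ℕ} (f : BF n) (r : ℕ) : Prop :=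
  ∀ S : Finset (Fin n), anf f S ≠ 0 → S.card = r

/-- `φ` is an affine map. -/
def IsAffineMap {n m : ℕ} (φ : (Fin m → ZMod 2) → (Fin n → ZMod 2)) : Prop :=
  ∃ (L : (Fin m → ZMod 2) →ₗ[ZMod 2] (Fin n → ZMod 2)) (b : Fin n → ZMod 2),
    φ = fun x => L x + b

/-- `A` is a degree-drop affine subspace of co-dimension `k` for `f` : `A` is the range of an
injective affine parametrization `φ` defined on `F_2^{n-k}`, and the restriction `f|_A`,
viewed as the Boolean function `f ∘ φ` in `n-k` variables, has degree `< deg f`. -/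
def DegreeDropSet {n : ℕ} (f : BF n) (k : ℕ) (A : Set (Fin n → ZMod 2)) : Prop :=
  ∃ φ : (Fin (n - k) → ZMod 2) → (Fin n → ZMod 2),
    IsAffineMap φ ∧ Function.Injective φ ∧ Set.range φ = A ∧ degB (f ∘ φ) < degB f

/-- `f` has some degree-drop affine subspace of co-dimension `k`. -/
def HasDDS {n : ℕ} (f : BF n) (k : ℕ) : Prop :=
  ∃ A : Set (Fin n → ZMod 2), DegreeDropSet f k A

/-- `SimEq r f g` is the relation `f ∼_{r-1} g` : there are an invertible affine
transformation `x ↦ L x + b` of `F_2^n` and a Boolean function `h` of degree at most `r-1`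
such that `g = f ∘ φ + h`. -/
def SimEq {n : ℕ} (r : ℕ) (f g : BF n) : Prop :=
  ∃ (L : (Fin n → ZMod 2) ≃ₗ[ZMod 2] (Fin n → ZMod 2)) (b : Fin n → ZMod 2) (h : BF n),
    degB h ≤ ((r - 1 : ℕ) : WithBot ℕ) ∧ g = fun x => f (L x + b) + h x

/-- The complement `f^c` of a (homogeneous) Boolean function: each monomial `m` of the ANF
is replaced by the monomial on the complementary set of variables. -/
def bcompl {n : ℕ} (f : BF n) : BF n :=
  fun x => ∑ S ∈ Finset.univ.filter (fun S : Finset (Fin n) => anf f S ≠ 0), ∏ i ∈ Sᶜ, x i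

/-- Discrete derivative of `f` in direction `a`. -/
def deriv1 {n : ℕ} (a : Fin n → ZMod 2) (f : BF n) : BF n :=
  fun x => f (x + a) + f x

/-- `a` is a fast point of `f` : `a ≠ 0` and `deg (D_a f) < deg f - 1`. -/
def FastPoint {n : ℕ} (f : BF n) (a : Fin n → ZMod 2) : Prop :=
  a ≠ 0 ∧ degB (deriv1 a f) + 1 < degB f

/-- Membership in `K_{k,r,n}` : `f` is a nonzero homogeneous Boolean function of degree `r`
in `n` variables with no degree-drop affine subspace of co-dimension `k`. -/
def memK {n : ℕ} (k r : ℕ) (f : BF n) : Prop :=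
  Homog f r ∧ degB f = (r : WithBot ℕ) ∧ ¬ HasDDS f k

/-- The restriction degree stability of `f` : the largest `k` such that `f` has no
degree-drop affine subspace of co-dimension `k`. -/
noncomputable def degStab {n : ℕ} (f : BF n) : ℕ :=
  sSup {k : ℕ | ¬ HasDDS f k}

/-- `deg_stab(r,n)` : the maximum of `degStab f` over all Boolean functions `f` of
degree `r` in `n` variables. -/
noncomputable def degStabRN (r n : ℕ) : ℕ :=
  sSup {d : ℕ | ∃ f : BF n, degB f = (r : WithBot ℕ) ∧ d = degStab f}

/-- `g` depends only on the variables in `S`. -/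
def DependsOnlyOn {n : ℕ} (g : BF n) (S : Finset (Fin n)) : Prop :=
  ∀ x y : Fin n → ZMod 2, (∀ i ∈ S, x i = y i) → g x = g y

/-- `rank_{r-1}(f)` : the minimum `m` such that some Boolean function `g` depending on only
`m` of the variables satisfies `f ∼_{r-1} g`. -/
noncomputable def rankB {n : ℕ} (r : ℕ) (f : BF n) : ℕ :=
  sInf {m : ℕ | ∃ g : BF n, SimEq r f g ∧
    ∃ S : Finset (Fin n), S.card = m ∧ DependsOnlyOn g S}

/-- Iterated discrete derivative `D_{a_1}(D_{a_2}(⋯ D_{a_k} f))` along a list of directions. -/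
def derivList {n : ℕ} : List (Fin n → ZMod 2) → BF n → BF n
  | [], f => f
  | a :: l, f => deriv1 a (derivList l f)
-- basics
lemma z2_add_self : ∀ a : ZMod 2, a + a = 0 := by decide

lemma z2_cases : ∀ a : ZMod 2, a = 0 ∨ a = 1 := by decide

def chi {n : ℕ} (T : Finset (Fin n)) : Fin n → ZMod 2 := fun i => if i ∈ T then 1 else 0

lemma anf_def' {n : ℕ} (f : BF n) (S : Finset (Fin n)) :
    anf f S = ∑ T ∈ S.powerset, f (chi T) := rfl

lemma chi_insert {n : ℕ} {T : Finset (Fin n)} {a : Fin n} (ha : a ∉ T) :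
    chi (insert a T) = chi T + Pi.single a 1 := by
  funext i
  by_cases h : i = a
  · subst h
    simp [chi, ha, Pi.single_apply]
  · simp [chi, h, Pi.single_apply, Finset.mem_insert]

/-- Möbius inversion for the ANF. -/
lemma sum_anf_powerset {n : ℕ} (T : Finset (Fin n)) : ∀ f : BF n,
    ∑ S ∈ T.powerset, anf f S = f (chi T) := by
  induction T using Finset.induction_on with
  | empty => intro f; simp [anf_def']
  | insert a T ha ih =>
    intro f
    set g : BF _ := fun x => f (x + Pi.single a 1) with hg
    rw [Finset.sum_powerset_insert ha]
    have h1 : ∀ S : Finset _, S ∈ T.powerset →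
        anf f (insert a S) = anf f S + anf g S := by
      intro S hS
      have haS : a ∉ S := fun h => ha (Finset.mem_powerset.1 hS h)
      rw [anf_def', anf_def', anf_def', Finset.sum_powerset_insert haS]
      congr 1
      apply Finset.sum_congr rfl
      intro U hU
      have haU : a ∉ U := fun h => haS (Finset.mem_powerset.1 hU h)
      rw [chi_insert haU]
    rw [Finset.sum_congr rfl h1, Finset.sum_add_distrib, ih f, ih g,
      ← add_assoc, z2_add_self, zero_add]
    show f (chi T + Pi.single a 1) = _
    rw [← chi_insert ha]

/-- Polynomial (ANF) evaluation formula. -/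
lemma eval_anf {n : ℕ} (f : BF n) (x : Fin n → ZMod 2) :
    f x = ∑ U ∈ (univ : Finset (Fin n)).powerset, anf f U * ∏ i ∈ U, x i := by
  classical
  set T : Finset (Fin n) := univ.filter (fun i => x i = 1) with hT
  have hx : x = chi T := by
    funext i
    rcases z2_cases (x i) with h | h <;> simp [chi, hT, h]
  have hprod : ∀ U : Finset (Fin n), (∏ i ∈ U, x i) = if U ⊆ T then 1 else 0 := by
    intro U
    by_cases hU : U ⊆ T
    · rw [if_pos hU]
      apply Finset.prod_eq_one
      intro i hi
      have := hU hi
      rw [hT, Finset.mem_filter] at this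
      exact this.2
    · rw [if_neg hU]
      obtain ⟨i, hiU, hiT⟩ := Finset.not_subset.1 hU
      apply Finset.prod_eq_zero hiU
      rcases z2_cases (x i) with h | h
      · exact h
      · exact absurd (by rw [hT]; simp [h]) hiT
  calc f x = f (chi T) := by rw [hx]
    _ = ∑ S ∈ T.powerset, anf f S := (sum_anf_powerset T f).symm
    _ = ∑ U ∈ (univ : Finset (Fin n)).powerset, anf f U * ∏ i ∈ U, x i := by
        have h2 : ∀ U ∈ (univ : Finset (Fin n)).powerset,
            anf f U * ∏ i ∈ U, x i = if U ⊆ T then anf f U else 0 := by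
          intro U _
          rw [hprod U, mul_ite, mul_one, mul_zero]
        rw [Finset.sum_congr rfl h2, ← Finset.sum_filter]
        congr 1
        ext U
        simp [Finset.mem_filter, Finset.mem_powerset]

lemma bf_eq_zero_of_anf {n : ℕ} (f : BF n) (h : ∀ S, anf f S = 0) : ∀ x, f x = 0 := by
  intro x
  rw [eval_anf f x]
  apply Finset.sum_eq_zero
  intro U _
  rw [h U, zero_mul]

/-- Multilinear core: a sum over all subsets of `W` of a product of fewer than `|W|`
linear forms vanishes. -/
lemma mlin_sum_zero {ι ι' : Type*} [DecidableEq ι] [DecidableEq ι'] (W : Finset ι) :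
    ∀ (V : Finset ι') (c : ι → ι' → ZMod 2), V.card < W.card →
      ∑ T ∈ W.powerset, ∏ i ∈ V, (∑ j ∈ T, c j i) = 0 := by
  induction W using Finset.induction_on with
  | empty => intro V c h; simp at h
  | insert a W ha ih =>
    intro V c hcard
    rw [Finset.sum_powerset_insert ha]
    have key : ∀ T ∈ W.powerset,
        (∏ i ∈ V, (∑ j ∈ T, c j i)) + (∏ i ∈ V, (∑ j ∈ insert a T, c j i))
        = ∑ V' ∈ V.powerset.erase V, (∏ i ∈ V', (∑ j ∈ T, c j i)) * ∏ i ∈ V \ V', c a i := by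
      intro T hT
      have haT : a ∉ T := fun h => ha (Finset.mem_powerset.1 hT h)
      have h1 : ∀ i ∈ V, (∑ j ∈ insert a T, c j i) = (∑ j ∈ T, c j i) + c a i := by
        intro i _
        rw [Finset.sum_insert haT, add_comm]
      rw [Finset.prod_congr rfl h1, Finset.prod_add]
      rw [← Finset.add_sum_erase _ _ (Finset.mem_powerset_self V)]
      rw [Finset.sdiff_self, Finset.prod_empty, mul_one, ← add_assoc, z2_add_self, zero_add]
    rw [← Finset.sum_add_distrib, Finset.sum_congr rfl key, Finset.sum_comm]
    apply Finset.sum_eq_zero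
    intro V' hV'
    rw [Finset.mem_erase, Finset.mem_powerset] at hV'
    have hVc : V'.card < W.card := by
      have h1 : V'.card < V.card := Finset.card_lt_card (lt_of_le_of_ne hV'.2 hV'.1)
      have h2 : V.card < W.card + 1 := by
        rwa [Finset.card_insert_of_notMem ha] at hcard
      omega
    have := ih V' c hVc
    calc ∑ T ∈ W.powerset, (∏ i ∈ V', (∑ j ∈ T, c j i)) * ∏ i ∈ V \ V', c a i
        = (∑ T ∈ W.powerset, ∏ i ∈ V', (∑ j ∈ T, c j i)) * ∏ i ∈ V \ V', c a i := by
          rw [Finset.sum_mul]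
      _ = 0 := by rw [this, zero_mul]

/-- Affine core: sum over subsets of `W` of a product of fewer than `|W|` affine forms. -/
lemma affprod_sum_zero {ι ι' : Type*} [DecidableEq ι] [DecidableEq ι'] (W : Finset ι)
    (V : Finset ι') (b : ι' → ZMod 2) (c : ι → ι' → ZMod 2) (h : V.card < W.card) :
    ∑ T ∈ W.powerset, ∏ i ∈ V, (b i + ∑ j ∈ T, c j i) = 0 := by
  have h1 : ∀ T ∈ W.powerset, (∏ i ∈ V, (b i + ∑ j ∈ T, c j i))
      = ∑ V' ∈ V.powerset, (∏ i ∈ V', b i) * ∏ i ∈ V \ V', (∑ j ∈ T, c j i) :=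
    fun T _ => Finset.prod_add _ _ V
  rw [Finset.sum_congr rfl h1, Finset.sum_comm]
  apply Finset.sum_eq_zero
  intro V' hV'
  have hcard : (V \ V').card < W.card := lt_of_le_of_lt (Finset.card_le_card (Finset.sdiff_subset)) h
  calc ∑ T ∈ W.powerset, (∏ i ∈ V', b i) * ∏ i ∈ V \ V', (∑ j ∈ T, c j i)
      = (∏ i ∈ V', b i) * ∑ T ∈ W.powerset, ∏ i ∈ V \ V', (∑ j ∈ T, c j i) := by
        rw [Finset.mul_sum]
    _ = 0 := by rw [mlin_sum_zero W (V \ V') c hcard, mul_zero]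

/-- Key summation lemma: the sum of `f` over a (possibly degenerate) flat of dimension
greater than the degree of `f` vanishes. -/
lemma sum_flat_zero {n : ℕ} {ι : Type*} [DecidableEq ι] (f : BF n) (W : Finset ι)
    (hf : ∀ S, anf f S ≠ 0 → S.card < W.card) (b : Fin n → ZMod 2)
    (c : ι → (Fin n → ZMod 2)) :
    ∑ T ∈ W.powerset, f (b + ∑ j ∈ T, c j) = 0 := by
  have h1 : ∀ T ∈ W.powerset, f (b + ∑ j ∈ T, c j)
      = ∑ U ∈ (univ : Finset (Fin n)).powerset, anf f U * ∏ i ∈ U, (b i + ∑ j ∈ T, c j i) := by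
    intro T _
    rw [eval_anf f]
    apply Finset.sum_congr rfl
    intro U _
    congr 1
    apply Finset.prod_congr rfl
    intro i _
    simp [Finset.sum_apply]
  rw [Finset.sum_congr rfl h1, Finset.sum_comm]
  apply Finset.sum_eq_zero
  intro U _
  by_cases hU : anf f U = 0
  · apply Finset.sum_eq_zero; intro T _; rw [hU, zero_mul]
  · rw [← Finset.mul_sum, affprod_sum_zero W U b (fun j i => c j i) (hf U hU), mul_zero]

-- degB API
lemma le_degB {n : ℕ} {f : BF n} {S : Finset (Fin n)} (h : anf f S ≠ 0) :
    (S.card : WithBot ℕ) ≤ degB f := by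
  rw [degB]
  exact Finset.le_sup (f := fun S : Finset (Fin n) => (S.card : WithBot ℕ))
    (by simp [Finset.mem_filter, h])

lemma degB_le_iff {n : ℕ} {f : BF n} {d : WithBot ℕ} :
    degB f ≤ d ↔ ∀ S : Finset (Fin n), anf f S ≠ 0 → (S.card : WithBot ℕ) ≤ d := by
  rw [degB, Finset.sup_le_iff]
  constructor
  · intro h S hS; exact h S (by simp [Finset.mem_filter, hS])
  · intro h S hS; exact h S (by simpa [Finset.mem_filter] using hS)

lemma degB_eq_bot {n : ℕ} {f : BF n} (h : ∀ S, anf f S = 0) : degB f = ⊥ := by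
  rw [degB]
  have : (univ.filter (fun S : Finset (Fin n) => anf f S ≠ 0)) = ∅ := by
    apply Finset.filter_eq_empty_iff.2
    intro S _
    simp [h S]
  rw [this, Finset.sup_empty]

lemma exists_degB {n : ℕ} {f : BF n} {S0 : Finset (Fin n)} (h0 : anf f S0 ≠ 0) :
    ∃ S, anf f S ≠ 0 ∧ degB f = (S.card : WithBot ℕ) := by
  have hne : (univ.filter (fun S : Finset (Fin n) => anf f S ≠ 0)).Nonempty :=
    ⟨S0, by simp [Finset.mem_filter, h0]⟩
  obtain ⟨S, hS, hsup⟩ := Finset.exists_mem_eq_sup _ hne (fun S : Finset (Fin n) => (S.card : WithBot ℕ))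
  exact ⟨S, by simpa [Finset.mem_filter] using hS, hsup⟩

lemma chi_eq_sum_single {n : ℕ} (T : Finset (Fin n)) :
    chi T = ∑ j ∈ T, Pi.single j (1 : ZMod 2) := by
  funext i
  rw [Finset.sum_apply]
  by_cases h : i ∈ T
  · rw [show chi T i = 1 from if_pos h]
    symm
    have := Finset.sum_eq_single_of_mem (s := T)
      (f := fun c => Pi.single c (1 : ZMod 2) i) i h
      (fun j _ hj => Pi.single_eq_of_ne (Ne.symm hj) 1)
    rw [this]
    simp
  · rw [show chi T i = 0 from if_neg h]
    symm
    apply Finset.sum_eq_zero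
    intro j hj
    exact Pi.single_eq_of_ne (fun hc => h (by rwa [hc])) 1

/-- ANF coefficients of an affine composition vanish above the degree. -/
lemma anf_comp_affine_zero {n m : ℕ} (f : BF n)
    (L : (Fin m → ZMod 2) →ₗ[ZMod 2] (Fin n → ZMod 2)) (b : Fin n → ZMod 2)
    (S : Finset (Fin m)) (hf : ∀ U, anf f U ≠ 0 → U.card < S.card) :
    anf (fun x => f (L x + b)) S = 0 := by
  have h1 : ∀ T ∈ S.powerset, f (L (chi T) + b) = f (b + ∑ j ∈ T, L (Pi.single j 1)) := by
    intro T _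
    rw [chi_eq_sum_single, map_sum, add_comm]
  calc anf (fun x => f (L x + b)) S = ∑ T ∈ S.powerset, f (L (chi T) + b) := rfl
    _ = ∑ T ∈ S.powerset, f (b + ∑ j ∈ T, L (Pi.single j 1)) := Finset.sum_congr rfl h1
    _ = 0 := sum_flat_zero f S hf b _

lemma degB_comp_affine_le {n m : ℕ} (f : BF n)
    (L : (Fin m → ZMod 2) →ₗ[ZMod 2] (Fin n → ZMod 2)) (b : Fin n → ZMod 2) :
    degB (fun x => f (L x + b)) ≤ degB f := by
  rw [degB_le_iff]
  intro S hS
  by_contra hc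
  push_neg at hc
  apply hS
  apply anf_comp_affine_zero f L b S
  intro U hU
  have h1 : (U.card : WithBot ℕ) < (S.card : WithBot ℕ) := lt_of_le_of_lt (le_degB hU) hc
  exact_mod_cast h1

set_option maxHeartbeats 1000000 in
lemma degB_comp_affine_equiv {n : ℕ} (f : BF n)
    (M : (Fin n → ZMod 2) ≃ₗ[ZMod 2] (Fin n → ZMod 2)) (b : Fin n → ZMod 2) :
    degB (fun x => f (M x + b)) = degB f := by
  apply le_antisymm (degB_comp_affine_le f M.toLinearMap b)
  have h1 : f = fun y => (fun x => f (M x + b)) (M.symm.toLinearMap y + M.symm b) := by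
    funext y
    simp only [LinearEquiv.coe_coe, map_add, LinearEquiv.apply_symm_apply]
    congr 1
    funext i
    rw [Pi.add_apply, Pi.add_apply, add_assoc, z2_add_self, add_zero]
  calc degB f = degB (fun y => (fun x => f (M x + b)) (M.symm.toLinearMap y + M.symm b)) := by
        rw [← h1]
    _ ≤ degB (fun x => f (M x + b)) :=
        degB_comp_affine_le (fun x => f (M x + b)) M.symm.toLinearMap (M.symm b)

set_option maxHeartbeats 1000000 in
/-- Any two injective linear maps into `F₂ⁿ` from `F₂ᵐ` differ by an automorphism. -/
lemma exists_extend_equiv {n m : ℕ}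
    (J L : (Fin m → ZMod 2) →ₗ[ZMod 2] (Fin n → ZMod 2))
    (hJ : Function.Injective J) (hL : Function.Injective L) :
    ∃ M : (Fin n → ZMod 2) ≃ₗ[ZMod 2] (Fin n → ZMod 2), ∀ t, M (J t) = L t := by
  obtain ⟨p', hp'⟩ := Submodule.exists_isCompl (LinearMap.range J)
  obtain ⟨q', hq'⟩ := Submodule.exists_isCompl (LinearMap.range L)
  set e1 : LinearMap.range J ≃ₗ[ZMod 2] LinearMap.range L :=
    (LinearEquiv.ofInjective J hJ).symm.trans (LinearEquiv.ofInjective L hL) with he1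
  have hrank : Module.finrank (ZMod 2) p' = Module.finrank (ZMod 2) q' := by
    have h1 := Submodule.finrank_add_eq_of_isCompl hp'
    have h2 := Submodule.finrank_add_eq_of_isCompl hq'
    have h3 : Module.finrank (ZMod 2) (LinearMap.range J)
        = Module.finrank (ZMod 2) (LinearMap.range L) := e1.finrank_eq
    omega
  have e2 : (p' : Submodule (ZMod 2) (Fin n → ZMod 2)) ≃ₗ[ZMod 2] q' :=
    LinearEquiv.ofFinrankEq _ _ hrank
  refine ⟨((Submodule.prodEquivOfIsCompl _ _ hp').symm.trans
    ((e1.prodCongr e2).trans (Submodule.prodEquivOfIsCompl _ _ hq'))), ?_⟩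
  intro t
  have jt : LinearMap.range J := ⟨J t, LinearMap.mem_range_self J t⟩
  have h1 : (Submodule.prodEquivOfIsCompl _ _ hp').symm (J t)
      = ((⟨J t, LinearMap.mem_range_self J t⟩ : LinearMap.range J), (0 : p')) :=
    Submodule.prodEquivOfIsCompl_symm_apply_left _ _ hp'
      (⟨J t, LinearMap.mem_range_self J t⟩ : LinearMap.range J)
  simp only [LinearEquiv.trans_apply, h1, LinearEquiv.prodCongr_apply]
  rw [Submodule.coe_prodEquivOfIsCompl']
  simp only [map_zero, Submodule.coe_zero, add_zero]
  have h2 : e1 (⟨J t, LinearMap.mem_range_self J t⟩ : LinearMap.range J)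
      = (⟨L t, LinearMap.mem_range_self L t⟩ : LinearMap.range L) := by
    have h3 : (⟨J t, LinearMap.mem_range_self J t⟩ : LinearMap.range J)
        = LinearEquiv.ofInjective J hJ t := rfl
    rw [he1]
    rw [LinearEquiv.trans_apply, h3, LinearEquiv.symm_apply_apply]
    rfl
  rw [h2]

-- Coordinate subspace machinery
def ivL {n m : ℕ} (hmn : m ≤ n) : (Fin m → ZMod 2) →ₗ[ZMod 2] (Fin n → ZMod 2) where
  toFun t := fun i => if h : (i : ℕ) < m then t ⟨i, h⟩ else 0
  map_add' x y := by funext i; by_cases h : (i : ℕ) < m <;> simp [h]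
  map_smul' c x := by funext i; by_cases h : (i : ℕ) < m <;> simp [h]

lemma ivL_apply_castLE {n m : ℕ} (hmn : m ≤ n) (t : Fin m → ZMod 2) (j : Fin m) :
    ivL hmn t (Fin.castLE hmn j) = t j := by
  have h : ((Fin.castLE hmn j : Fin n) : ℕ) < m := j.isLt
  show (if h : _ then _ else _) = t j
  rw [dif_pos h]
  exact congrArg t (Fin.ext rfl)

lemma ivL_injective {n m : ℕ} (hmn : m ≤ n) : Function.Injective (ivL hmn) := by
  intro s t hst
  funext j
  have := congrFun hst (Fin.castLE hmn j)
  rwa [ivL_apply_castLE, ivL_apply_castLE] at this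

def Mset {n : ℕ} (m : ℕ) : Finset (Fin n) := univ.filter (fun i => (i : ℕ) < m)

def pre {n m : ℕ} (hmn : m ≤ n) (T : Finset (Fin n)) : Finset (Fin m) :=
  univ.filter (fun j => Fin.castLE hmn j ∈ T)

lemma mem_range_ivL_iff_chi {n m : ℕ} (hmn : m ≤ n) (T : Finset (Fin n)) :
    chi T ∈ Set.range (ivL hmn) ↔ T ⊆ Mset m := by
  constructor
  · rintro ⟨t, ht⟩ i hi
    rw [Mset, Finset.mem_filter]
    refine ⟨Finset.mem_univ i, ?_⟩
    by_contra hc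
    have h1 : chi T i = 1 := if_pos hi
    have h2 : ivL hmn t i = 0 := dif_neg hc
    have h3 := congrFun ht i
    rw [h2, h1] at h3
    exact one_ne_zero h3.symm
  · intro hT
    refine ⟨chi (pre hmn T), ?_⟩
    funext i
    by_cases h : (i : ℕ) < m
    · have : ivL hmn (chi (pre hmn T)) i = chi (pre hmn T) ⟨i, h⟩ := dif_pos h
      rw [this]
      have hcast : Fin.castLE hmn (⟨(i : ℕ), h⟩ : Fin m) = i := by
        apply Fin.ext; rfl
      show (if _ ∈ pre hmn T then (1 : ZMod 2) else 0) = chi T i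
      rw [pre]
      simp only [Finset.mem_filter, Finset.mem_univ, true_and, hcast]
      rfl
    · have h2 : ivL hmn (chi (pre hmn T)) i = 0 := dif_neg h
      have h3 : i ∉ T := fun hc => h (by simpa [Mset, Finset.mem_filter] using hT hc)
      rw [h2]
      exact (if_neg h3).symm

lemma chi_eq_ivL {n m : ℕ} (hmn : m ≤ n) {T : Finset (Fin n)} (hT : T ⊆ Mset m) :
    chi T = ivL hmn (chi (pre hmn T)) := by
  have := (mem_range_ivL_iff_chi hmn T).2 hT
  obtain ⟨t, ht⟩ := this
  -- recompute as in the lemma; easier: redo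
  funext i
  by_cases h : (i : ℕ) < m
  · have h1 : ivL hmn (chi (pre hmn T)) i = chi (pre hmn T) ⟨i, h⟩ := dif_pos h
    rw [h1]
    have hcast : Fin.castLE hmn (⟨(i : ℕ), h⟩ : Fin m) = i := by apply Fin.ext; rfl
    show chi T i = (if _ ∈ pre hmn T then (1 : ZMod 2) else 0)
    rw [pre]
    simp only [Finset.mem_filter, Finset.mem_univ, true_and, hcast]
    rfl
  · have h2 : ivL hmn (chi (pre hmn T)) i = 0 := dif_neg h
    have h3 : i ∉ T := fun hc => h (by simpa [Mset, Finset.mem_filter] using hT hc)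
    rw [h2]
    exact if_neg h3

lemma pre_image_castLE {n m : ℕ} (hmn : m ≤ n) (U : Finset (Fin m)) :
    pre hmn (U.image (Fin.castLE hmn)) = U := by
  ext j
  simp only [pre, Finset.mem_filter, Finset.mem_univ, true_and, Finset.mem_image]
  constructor
  · rintro ⟨j', hj', hj'e⟩
    rwa [show j' = j from Fin.castLE_injective hmn hj'e] at hj'
  · intro hj; exact ⟨j, hj, rfl⟩

lemma image_castLE_pre {n m : ℕ} (hmn : m ≤ n) {T : Finset (Fin n)} (hT : T ⊆ Mset m) :
    (pre hmn T).image (Fin.castLE hmn) = T := by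
  ext i
  simp only [Finset.mem_image, pre, Finset.mem_filter, Finset.mem_univ, true_and]
  constructor
  · rintro ⟨j, hj, rfl⟩; exact hj
  · intro hi
    have h : (i : ℕ) < m := by simpa [Mset, Finset.mem_filter] using hT hi
    exact ⟨⟨(i : ℕ), h⟩, by rwa [show Fin.castLE hmn ⟨(i : ℕ), h⟩ = i from Fin.ext rfl], Fin.ext rfl⟩

lemma card_pre {n m : ℕ} (hmn : m ≤ n) {T : Finset (Fin n)} (hT : T ⊆ Mset m) :
    (pre hmn T).card = T.card := by
  rw [← image_castLE_pre hmn hT, Finset.card_image_of_injective _ (Fin.castLE_injective hmn),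
    pre_image_castLE]

lemma card_Mset_compl {n m : ℕ} (hmn : m ≤ n) : ((Mset m)ᶜ : Finset (Fin n)).card = n - m := by
  have h1 : (Mset m : Finset (Fin n)).card = m := by
    have : (Mset m : Finset (Fin n)) = (univ : Finset (Fin m)).image (Fin.castLE hmn) := by
      ext i
      simp only [Mset, Finset.mem_filter, Finset.mem_univ, true_and, Finset.mem_image]
      constructor
      · intro h; exact ⟨⟨(i : ℕ), h⟩, Fin.ext rfl⟩
      · rintro ⟨j, rfl⟩; exact j.isLt
    rw [this, Finset.card_image_of_injective _ (Fin.castLE_injective hmn), Finset.card_univ,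
      Fintype.card_fin]
  rw [Finset.card_compl, h1, Fintype.card_fin]

/-- The key ANF identity: coefficients of `h · 1_E` are coefficients of `h|_E`. -/
lemma anf_mul_indicator {n m : ℕ} (hmn : m ≤ n) (h : BF n) (S : Finset (Fin n)) :
    anf (fun x => h x * Set.indicator (Set.range (ivL hmn)) (fun _ => (1 : ZMod 2)) x) S
      = anf (fun t => h (ivL hmn t)) (pre hmn S) := by
  have hval : ∀ T : Finset (Fin n),
      h (chi T) * Set.indicator (Set.range (ivL hmn)) (fun _ => (1 : ZMod 2)) (chi T)
      = if T ⊆ Mset m then h (ivL hmn (chi (pre hmn T))) else 0 := by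
    intro T
    by_cases hT : T ⊆ Mset m
    · rw [if_pos hT, Set.indicator_of_mem ((mem_range_ivL_iff_chi hmn T).2 hT), mul_one,
        ← chi_eq_ivL hmn hT]
    · rw [if_neg hT, Set.indicator_of_notMem (fun hc => hT ((mem_range_ivL_iff_chi hmn T).1 hc)),
        mul_zero]
  calc anf (fun x => h x * Set.indicator (Set.range (ivL hmn)) (fun _ => (1 : ZMod 2)) x) S
      = ∑ T ∈ S.powerset, if T ⊆ Mset m then h (ivL hmn (chi (pre hmn T))) else 0 := by
        rw [anf_def']
        exact Finset.sum_congr rfl (fun T _ => hval T)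
    _ = ∑ T ∈ (S ∩ Mset m).powerset, h (ivL hmn (chi (pre hmn T))) := by
        rw [← Finset.sum_filter]
        congr 1
        ext T
        simp only [Finset.mem_filter, Finset.mem_powerset, Finset.subset_inter_iff]
    _ = ∑ T' ∈ (pre hmn S).powerset, h (ivL hmn (chi T')) := by
        apply Finset.sum_nbij' (fun T => pre hmn T) (fun T' => T'.image (Fin.castLE hmn))
        · intro T hT
          rw [Finset.mem_powerset] at hT ⊢
          intro j hj
          rw [pre, Finset.mem_filter] at hj ⊢
          exact ⟨hj.1, (Finset.mem_inter.1 (hT hj.2)).1⟩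
        · intro T' hT'
          rw [Finset.mem_powerset] at hT' ⊢
          apply Finset.subset_inter
          · intro i hi
            rw [Finset.mem_image] at hi
            obtain ⟨j, hj, rfl⟩ := hi
            have := hT' hj
            rw [pre, Finset.mem_filter] at this
            exact this.2
          · intro i hi
            rw [Finset.mem_image] at hi
            obtain ⟨j, _, rfl⟩ := hi
            simp [Mset, Finset.mem_filter]
        · intro T hT
          rw [Finset.mem_powerset] at hT
          exact image_castLE_pre hmn (fun i hi => (Finset.mem_inter.1 (hT hi)).2)
        · intro T' _
          exact pre_image_castLE hmn T'
        · intro T _; rfl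
    _ = anf (fun t => h (ivL hmn t)) (pre hmn S) := by rw [anf_def']

lemma pre_inter_Mset {n m : ℕ} (hmn : m ≤ n) (S : Finset (Fin n)) :
    pre hmn (S ∩ Mset m) = pre hmn S := by
  ext j
  simp only [pre, Finset.mem_filter, Finset.mem_univ, true_and, Finset.mem_inter]
  have : Fin.castLE hmn j ∈ Mset m := by
    simp only [Mset, Finset.mem_filter, Finset.mem_univ, true_and]
    exact j.isLt
  tauto

lemma degB_mul_indicator_coord {n m : ℕ} (hmn : m ≤ n) (h : BF n) :
    degB (fun x => h x * Set.indicator (Set.range (ivL hmn)) (fun _ => (1 : ZMod 2)) x)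
      = degB (fun t => h (ivL hmn t)) + ((n - m : ℕ) : WithBot ℕ) := by
  set g0 : BF m := fun t => h (ivL hmn t) with hg0
  set F : BF n := fun x =>
    h x * Set.indicator (Set.range (ivL hmn)) (fun _ => (1 : ZMod 2)) x with hF
  by_cases hz : ∀ U : Finset (Fin m), anf g0 U = 0
  · have h1 : degB F = ⊥ := degB_eq_bot (fun S => by
      rw [hF, anf_mul_indicator hmn h S, ← hg0, hz])
    have h2 : degB g0 = ⊥ := degB_eq_bot hz
    rw [h1, h2, WithBot.bot_add]
  · push_neg at hz
    obtain ⟨U0, hU0⟩ := hz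
    obtain ⟨U, hU, hUdeg⟩ := exists_degB hU0
    rw [hUdeg]
    have hcoe : (U.card : WithBot ℕ) + ((n - m : ℕ) : WithBot ℕ)
        = ((U.card + (n - m) : ℕ) : WithBot ℕ) := by
      rw [Nat.cast_add]
    rw [hcoe]
    apply le_antisymm
    · rw [degB_le_iff]
      intro S hS
      rw [hF, anf_mul_indicator hmn h S, ← hg0] at hS
      have h1 : ((pre hmn S).card : WithBot ℕ) ≤ (U.card : WithBot ℕ) :=
        hUdeg ▸ le_degB hS
      have h2 : (pre hmn S).card ≤ U.card := by exact_mod_cast h1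
      have h3 : (S ∩ Mset m).card = (pre hmn S).card := by
        rw [← pre_inter_Mset hmn S, card_pre hmn (Finset.inter_subset_right)]
      have h4 : (S \ Mset m).card ≤ n - m := by
        rw [← card_Mset_compl hmn]
        apply Finset.card_le_card
        intro i hi
        rw [Finset.mem_sdiff] at hi
        rw [Finset.mem_compl]
        exact hi.2
      have h5 : S.card ≤ U.card + (n - m) := by
        have := Finset.card_inter_add_card_sdiff S (Mset m)
        omega
      exact_mod_cast h5
    · set S : Finset (Fin n) := U.image (Fin.castLE hmn) ∪ ((Mset m)ᶜ : Finset (Fin n))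
        with hS
      have hpre : pre hmn S = U := by
        ext j
        simp only [hS, pre, Finset.mem_filter, Finset.mem_univ, true_and, Finset.mem_union,
          Finset.mem_compl, Finset.mem_image]
        constructor
        · rintro (⟨j', hj', hj'e⟩ | hc)
          · rwa [show j' = j from Fin.castLE_injective hmn hj'e] at hj'
          · exact absurd (by simp only [Mset, Finset.mem_filter, Finset.mem_univ, true_and]; exact j.isLt) hc
        · intro hj; exact Or.inl ⟨j, hj, rfl⟩
      have hanf : anf F S ≠ 0 := by
        rw [hF, anf_mul_indicator hmn h S, hpre]
        exact hU
      have hcard : S.card = U.card + (n - m) := by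
        rw [hS, Finset.card_union_of_disjoint, Finset.card_image_of_injective _
          (Fin.castLE_injective hmn), card_Mset_compl hmn]
        · rw [Finset.disjoint_right]
          intro i hi
          rw [Finset.mem_compl] at hi
          rw [Finset.mem_image]
          rintro ⟨j, _, rfl⟩
          exact hi (by simp only [Mset, Finset.mem_filter, Finset.mem_univ, true_and]; exact j.isLt)
      calc ((U.card + (n - m) : ℕ) : WithBot ℕ) = (S.card : WithBot ℕ) := by rw [hcard]
        _ ≤ degB F := le_degB hanf

lemma degB_mul_indicator {n k : ℕ} (hk : k ≤ n) (f : BF n)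
    (φ : (Fin (n - k) → ZMod 2) → (Fin n → ZMod 2))
    (haff : ∃ (L : (Fin (n - k) → ZMod 2) →ₗ[ZMod 2] (Fin n → ZMod 2)) (b : Fin n → ZMod 2),
      φ = fun x => L x + b)
    (hinj : Function.Injective φ) :
    degB (fun x => f x * (Set.range φ).indicator (fun _ => (1 : ZMod 2)) x)
      = degB (f ∘ φ) + (k : WithBot ℕ) := by
  obtain ⟨L, b, rfl⟩ := haff
  have hmn : n - k ≤ n := Nat.sub_le n k
  have hL : Function.Injective L := by
    intro x y hxy
    apply hinj
    show L x + b = L y + b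
    rw [hxy]
  obtain ⟨M, hM⟩ := exists_extend_equiv (ivL hmn) L (ivL_injective hmn) hL
  have hiff : ∀ x, (M x + b ∈ Set.range (fun x => L x + b)) ↔ x ∈ Set.range (ivL hmn) := by
    intro x
    constructor
    · rintro ⟨t, ht⟩
      refine ⟨t, ?_⟩
      apply M.injective
      rw [hM]
      exact add_right_cancel ht
    · rintro ⟨t, rfl⟩
      exact ⟨t, by rw [hM]⟩
  have hcomp : ∀ x, (fun y => f y * (Set.range (fun x => L x + b)).indicator
        (fun _ => (1 : ZMod 2)) y) (M x + b)
      = (fun y => f (M y + b)) x * (Set.range (ivL hmn)).indicator (fun _ => (1 : ZMod 2)) x := by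
    intro x
    simp only []
    congr 1
    by_cases hx : x ∈ Set.range (ivL hmn)
    · rw [Set.indicator_of_mem hx, Set.indicator_of_mem ((hiff x).2 hx)]
    · rw [Set.indicator_of_notMem hx, Set.indicator_of_notMem (fun hc => hx ((hiff x).1 hc))]
  have hrestr : (fun t => (fun y => f (M y + b)) (ivL hmn t)) = f ∘ (fun x => L x + b) := by
    funext t
    show f (M (ivL hmn t) + b) = f (L t + b)
    rw [hM]
  calc degB (fun x => f x * (Set.range (fun x => L x + b)).indicator (fun _ => (1 : ZMod 2)) x)
      = degB (fun x => (fun y => f y * (Set.range (fun x => L x + b)).indicator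
          (fun _ => (1 : ZMod 2)) y) (M x + b)) :=
        (degB_comp_affine_equiv (fun y => f y * (Set.range (fun x => L x + b)).indicator
          (fun _ => (1 : ZMod 2)) y) M b).symm
    _ = degB (fun x => (fun y => f (M y + b)) x
          * (Set.range (ivL hmn)).indicator (fun _ => (1 : ZMod 2)) x) := by
        apply congrArg
        funext x
        exact hcomp x
    _ = degB (fun t => (fun y => f (M y + b)) (ivL hmn t)) + ((n - (n - k) : ℕ) : WithBot ℕ) :=
        degB_mul_indicator_coord hmn (fun y => f (M y + b))
    _ = degB (f ∘ (fun x => L x + b)) + (k : WithBot ℕ) := by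
        rw [hrestr, Nat.sub_sub_self hk]

lemma degB_const_one {m : ℕ} : degB (fun _ : Fin m → ZMod 2 => (1 : ZMod 2)) = (0 : WithBot ℕ) := by
  have hanf : ∀ S : Finset (Fin m), anf (fun _ => (1 : ZMod 2)) S
      = if S = ∅ then 1 else 0 := by
    intro S
    rw [anf, Finset.sum_const, Finset.card_powerset, nsmul_eq_mul, mul_one]
    by_cases hS : S = ∅
    · rw [if_pos hS, hS]; norm_num
    · rw [if_neg hS, Nat.cast_pow]
      have h2 : ((2 : ℕ) : ZMod 2) = 0 := by decide
      rw [h2, zero_pow (by simpa using hS)]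
  have hfilter : (univ.filter (fun S : Finset (Fin m) => anf (fun _ => (1 : ZMod 2)) S ≠ 0))
      = {∅} := by
    ext S
    simp only [Finset.mem_filter, Finset.mem_univ, true_and, Finset.mem_singleton, hanf S]
    by_cases hS : S = ∅ <;> simp [hS]
  rw [degB, hfilter, Finset.sup_singleton, Finset.card_empty, Nat.cast_zero]

lemma degB_comp_le' {n m : ℕ} (f : BF n) (φ : (Fin m → ZMod 2) → (Fin n → ZMod 2))
    (haff : ∃ (L : (Fin m → ZMod 2) →ₗ[ZMod 2] (Fin n → ZMod 2)) (b : Fin n → ZMod 2),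
      φ = fun x => L x + b) :
    degB (f ∘ φ) ≤ degB f := by
  obtain ⟨L, b, rfl⟩ := haff
  exact degB_comp_affine_le f L b

/-- STATEMENT 19: for any Boolean function `f` and any affine subspace `A` of co-dimension
`k` (given by an injective affine parametrization `φ` of `F₂^{n-k}`, so that `A = range φ`
and `f|_A = f ∘ φ`), we have `deg (f·1_A) = deg (f|_A) + deg (1_A)` and `deg (1_A) = k`.
Consequently, for `1 ≤ r ≤ n - k`, a nonzero homogeneous `f` of degree `r` has no degree-drop
affine subspace of co-dimension `k` iff `deg (f·1_A) = r + k` for every affine subspace `A`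
of co-dimension `k`. -/
theorem stmt19 {n k : ℕ} (hk : k ≤ n) :
    (∀ f : BF n, ∀ φ : (Fin (n - k) → ZMod 2) → (Fin n → ZMod 2),
      IsAffineMap φ → Function.Injective φ →
      degB (fun x => f x * (Set.range φ).indicator (fun _ => (1 : ZMod 2)) x)
          = degB (f ∘ φ) + (k : WithBot ℕ) ∧
      degB (fun x => (Set.range φ).indicator (fun _ => (1 : ZMod 2)) x)
          = (k : WithBot ℕ)) ∧
    (∀ r : ℕ, 1 ≤ r → r ≤ n - k → ∀ f : BF n, Homog f r → degB f = (r : WithBot ℕ) →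
      (¬ HasDDS f k ↔
        ∀ φ : (Fin (n - k) → ZMod 2) → (Fin n → ZMod 2),
          IsAffineMap φ → Function.Injective φ →
          degB (fun x => f x * (Set.range φ).indicator (fun _ => (1 : ZMod 2)) x)
            = ((r + k : ℕ) : WithBot ℕ))) := by
  have P1 : ∀ f : BF n, ∀ φ : (Fin (n - k) → ZMod 2) → (Fin n → ZMod 2),
      IsAffineMap φ → Function.Injective φ →
      degB (fun x => f x * (Set.range φ).indicator (fun _ => (1 : ZMod 2)) x)
        = degB (f ∘ φ) + (k : WithBot ℕ) := by
    intro f φ haff hinj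
    exact degB_mul_indicator hk f φ haff hinj
  constructor
  · intro f φ haff hinj
    refine ⟨P1 f φ haff hinj, ?_⟩
    have h2 := P1 (fun _ => (1 : ZMod 2)) φ haff hinj
    simp only [one_mul] at h2
    rw [h2, show ((fun _ => (1 : ZMod 2)) ∘ φ) = (fun _ : Fin (n - k) → ZMod 2 => (1 : ZMod 2))
      from rfl, degB_const_one, zero_add]
  · intro r _ _ f _ hdeg
    constructor
    · intro hnod φ haff hinj
      have h1 := P1 f φ haff hinj
      have hle : degB (f ∘ φ) ≤ degB f := degB_comp_le' f φ haff
      have hge : ¬ degB (f ∘ φ) < degB f := fun hc =>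
        hnod ⟨Set.range φ, φ, haff, hinj, rfl, hc⟩
      have heq : degB (f ∘ φ) = degB f := le_antisymm hle (not_lt.1 hge)
      rw [h1, heq, hdeg, ← Nat.cast_add]
    · intro hall
      rintro ⟨A, φ, haff, hinj, hrange, hlt⟩
      have h1 := P1 f φ haff hinj
      have h2 := hall φ haff hinj
      rw [h1] at h2
      have h3 : degB (f ∘ φ) = (r : WithBot ℕ) := by
        apply WithBot.add_right_cancel (z := (k : WithBot ℕ)) (by simp)
        rw [h2, Nat.cast_add]
      have h4 : degB (f ∘ φ) = degB f := by rw [h3, hdeg]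
      rw [h4] at hlt
      exact lt_irrefl _ hlt
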